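/- arXiv:0905.0602 — 3 statements merged into one kernel-verified Lean document; each statement's English description precedes it below -/
import Mathlib

section
/- Let A be a genotype matrix and B a haplotype matrix explaining A that satisfies the three gamete property. Let i, k, l be columns and g a row of A with g ∈ A_i and g[k] = g[l] = 2, and let h, h' be the two rows of B explaining g. If the resolution graph G_i contains an edge {k,l} of weight 1, then h[k] ≠ h[l]; if G_i contains an edge {k,l} of weight 0, then h[k] = h[l]. -/
/-- A pair of haplotypes `h`, `h'` explains a genotype `g`:
entries `0`/`1` are copied, and at `2`-entries the haplotypes differ. -/
def ExplainsRow {m : ℕ} (h h' : Fin m → Bool) (g : Fin m → Fin 3) : Prop :=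
  ∀ j : Fin m,
    (g j = 0 → h j = false ∧ h' j = false) ∧
    (g j = 1 → h j = true ∧ h' j = true) ∧
    (g j = 2 → h j ≠ h' j)

/-- A `2n × m` haplotype matrix, given by its odd rows `B₁` and even rows `B₂`,
explains an `n × m` genotype matrix `A`. -/
def Explains {n m : ℕ} (B₁ B₂ : Fin n → Fin m → Bool) (A : Fin n → Fin m → Fin 3) : Prop :=
  ∀ r : Fin n, ExplainsRow (B₁ r) (B₂ r) (A r)

/-- The induced set `ind^B(i,j)` of a haplotype matrix: all pairs `xy` appearing
in columns `i` and `j` in some row of `B`. -/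
def indB {n m : ℕ} (B₁ B₂ : Fin n → Fin m → Bool) (i j : Fin m) : Set (Bool × Bool) :=
  {p | ∃ r : Fin n, (B₁ r i = p.1 ∧ B₁ r j = p.2) ∨ (B₂ r i = p.1 ∧ B₂ r j = p.2)}

/-- The three gamete property: `{01,10,11}` is never a subset of an induced set. -/
def ThreeGamete {n m : ℕ} (B₁ B₂ : Fin n → Fin m → Bool) : Prop :=
  ∀ i j : Fin m,
    ¬ (({(false, true), (true, false), (true, true)} : Set (Bool × Bool)) ⊆ indB B₁ B₂ i j)

/-- The four gamete property: no induced set equals `{00,01,10,11}`. -/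
def FourGamete {n m : ℕ} (B₁ B₂ : Fin n → Fin m → Bool) : Prop :=
  ∀ i j : Fin m,
    indB B₁ B₂ i j ≠
      ({(false, false), (false, true), (true, false), (true, true)} : Set (Bool × Bool))

/-- A genotype matrix admits a directed perfect phylogeny if some explaining
haplotype matrix satisfies the three gamete property. -/
def AdmitsDirectedPP {n m : ℕ} (A : Fin n → Fin m → Fin 3) : Prop :=
  ∃ B₁ B₂ : Fin n → Fin m → Bool, Explains B₁ B₂ A ∧ ThreeGamete B₁ B₂

/-- A genotype matrix admits a perfect phylogeny if some explaining
haplotype matrix satisfies the four gamete property. -/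
def AdmitsPP {n m : ℕ} (A : Fin n → Fin m → Fin 3) : Prop :=
  ∃ B₁ B₂ : Fin n → Fin m → Bool, Explains B₁ B₂ A ∧ FourGamete B₁ B₂

/-- Encode a haplotype entry as a genotype entry. -/
def boolToFin3 (b : Bool) : Fin 3 := if b then 1 else 0

/-- The induced set `ind^A(i,j)` of a genotype matrix. -/
def indA {n m : ℕ} (A : Fin n → Fin m → Fin 3) (i j : Fin m) : Set (Bool × Bool) :=
  {p | ∃ r : Fin n,
    (A r i = boolToFin3 p.1 ∧ A r j = boolToFin3 p.2) ∨
    (A r i = boolToFin3 p.1 ∧ A r j = 2) ∨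
    (A r i = 2 ∧ A r j = boolToFin3 p.2)}

/-- Column `i` of `A` is greater than column `j` (written `i ≻^A j`):
`ind^A(i,j) ⊆ {00,10,11}` and the two columns are not identical. -/
def ColGreater {n m : ℕ} (A : Fin n → Fin m → Fin 3) (i j : Fin m) : Prop :=
  indA A i j ⊆ ({(false, false), (true, false), (true, true)} : Set (Bool × Bool)) ∧
  ∃ r : Fin n, A r i ≠ A r j

/-- The set `A_i`: rows `g` of `A` with `g[i] = 2` such that `i` is `≻^A`-maximal
among the `2`-columns of `g` and has the least index among all such maximal columns. -/
def rowSet {n m : ℕ} (A : Fin n → Fin m → Fin 3) (i : Fin m) : Set (Fin n) :=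
  {r | A r i = 2 ∧
    (∀ j : Fin m, j ≠ i → A r j = 2 → ¬ ColGreater A j i) ∧
    (∀ j : Fin m, j ≠ i →
      (A r j = 2 ∧ ∀ k : Fin m, k ≠ j → A r k = 2 → ¬ ColGreater A k j) → i < j)}

/-- `k` is a vertex of the resolution graph `G_i`. -/
def resVert {n m : ℕ} (A : Fin n → Fin m → Fin 3) (i k : Fin m) : Prop :=
  ∃ r ∈ rowSet A i, A r k = 2

/-- The weighted edges of the resolution graph `G_i`: an edge `{k,l}` of weight `0`
or weight `1`, as prescribed by the construction of resolution graphs. -/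
def resEdge {n m : ℕ} (A : Fin n → Fin m → Fin 3) (i : Fin m) (k l : Fin m) (w : ℕ) : Prop :=
  k ≠ l ∧ (∃ r ∈ rowSet A i, A r k = 2 ∧ A r l = 2) ∧
  ((w = 0 ∧
      (((true, true) : Bool × Bool) ∈ indA A k l ∨
        ∃ j : Fin m, j ≠ i ∧ ∃ r₂ ∈ rowSet A j, A r₂ k = 2 ∧ A r₂ l = 2)) ∨
   (w = 1 ∧ ({(false, true), (true, false)} : Set (Bool × Bool)) ⊆ indA A k l))

section ResolutionHelpers

variable {n m : ℕ} {A : Fin n → Fin m → Fin 3} {B₁ B₂ : Fin n → Fin m → Bool}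

private lemma fin3_cases (x : Fin 3) : x = 0 ∨ x = 1 ∨ x = 2 := by
  revert x; decide

private lemma eq2_of_ne (hexp : Explains B₁ B₂ A) {a : Fin n} {c : Fin m}
    (h : B₁ a c ≠ B₂ a c) : A a c = 2 := by
  rcases fin3_cases (A a c) with h0 | h1 | h2
  · obtain ⟨x, y⟩ := (hexp a c).1 h0; rw [x, y] at h; exact absurd rfl h
  · obtain ⟨x, y⟩ := (hexp a c).2.1 h1; rw [x, y] at h; exact absurd rfl h
  · exact h2

private lemma no3 (h3 : ThreeGamete B₁ B₂) {c d : Fin m}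
    (h1 : ((false, true) : Bool × Bool) ∈ indB B₁ B₂ c d)
    (h2 : ((true, false) : Bool × Bool) ∈ indB B₁ B₂ c d)
    (h4 : ((true, true) : Bool × Bool) ∈ indB B₁ B₂ c d) : False := by
  apply h3 c d
  intro p hp
  simp only [Set.mem_insert_iff, Set.mem_singleton_iff] at hp
  rcases hp with rfl | rfl | rfl <;> assumption

private lemma indA_sub (hexp : Explains B₁ B₂ A) (c d : Fin m) :
    indA A c d ⊆ indB B₁ B₂ c d := by
  rintro ⟨x, y⟩ ⟨a, hcase⟩
  have val : ∀ (e : Fin m) (z : Bool), A a e = boolToFin3 z → B₁ a e = z ∧ B₂ a e = z := by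
    intro e z h; cases z
    · exact (hexp a e).1 h
    · exact (hexp a e).2.1 h
  have resolve : ∀ {p q z : Bool}, p ≠ q → p ≠ z → q = z := by decide
  rcases hcase with ⟨h1, h2⟩ | ⟨h1, h2⟩ | ⟨h1, h2⟩
  · exact ⟨a, Or.inl ⟨(val c x h1).1, (val d y h2).1⟩⟩
  · have hc := val c x h1
    have hd := (hexp a d).2.2 h2
    by_cases hb : B₁ a d = y
    · exact ⟨a, Or.inl ⟨hc.1, hb⟩⟩
    · exact ⟨a, Or.inr ⟨hc.2, resolve hd hb⟩⟩
  · have hd := val d y h2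
    have hc := (hexp a c).2.2 h1
    by_cases hb : B₁ a c = x
    · exact ⟨a, Or.inl ⟨hb, hd.1⟩⟩
    · exact ⟨a, Or.inr ⟨resolve hc hb, hd.2⟩⟩

/-- Pick the two haplotypes of row `a`, oriented so the first has value `true`
at a given `2`-column `k`. -/
private lemma pick2 (hexp : Explains B₁ B₂ A) (a : Fin n) (k : Fin m) (hk : A a k = 2) :
    ∃ u u' : Fin m → Bool,
      (∀ c d : Fin m, (u c, u d) ∈ indB B₁ B₂ c d) ∧
      (∀ c d : Fin m, (u' c, u' d) ∈ indB B₁ B₂ c d) ∧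
      u k = true ∧
      (∀ c, A a c = 2 → u' c = !u c) ∧
      (∀ c, A a c = 1 → u c = true ∧ u' c = true) ∧
      (∀ c, A a c = 2 → B₁ a k ≠ B₁ a c → u c = false) ∧
      ((u = B₁ a ∧ u' = B₂ a) ∨ (u = B₂ a ∧ u' = B₁ a)) := by
  have hne := (hexp a k).2.2 hk
  cases hb : B₁ a k
  · refine ⟨B₂ a, B₁ a, fun c d => ⟨a, Or.inr ⟨rfl, rfl⟩⟩, fun c d => ⟨a, Or.inl ⟨rfl, rfl⟩⟩,
      ?_, ?_, ?_, ?_, Or.inr ⟨rfl, rfl⟩⟩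
    · cases h2 : B₂ a k
      · rw [hb, h2] at hne; exact absurd rfl hne
      · rfl
    · intro c hc
      have := (hexp a c).2.2 hc
      cases h1 : B₁ a c <;> cases h2 : B₂ a c <;> simp_all
    · intro c hc
      exact ⟨((hexp a c).2.1 hc).2, ((hexp a c).2.1 hc).1⟩
    · intro c hc hkc
      have := (hexp a c).2.2 hc
      cases h1 : B₁ a c <;> cases h2 : B₂ a c <;> simp_all
  · refine ⟨B₁ a, B₂ a, fun c d => ⟨a, Or.inl ⟨rfl, rfl⟩⟩, fun c d => ⟨a, Or.inr ⟨rfl, rfl⟩⟩,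
      hb, ?_, ?_, ?_, Or.inl ⟨rfl, rfl⟩⟩
    · intro c hc
      have := (hexp a c).2.2 hc
      cases h1 : B₁ a c <;> cases h2 : B₂ a c <;> simp_all
    · intro c hc
      exact ⟨((hexp a c).2.1 hc).1, ((hexp a c).2.1 hc).2⟩
    · intro c hc hkc
      cases h1 : B₁ a c <;> simp_all

private lemma not_cg_cases {c i : Fin m} (h : ¬ ColGreater A c i) :
    (∀ r' : Fin n, A r' c = A r' i) ∨ ((false, true) : Bool × Bool) ∈ indA A c i := by
  by_cases hs : indA A c i ⊆
      ({(false, false), (true, false), (true, true)} : Set (Bool × Bool))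
  · left; intro r'; by_contra hne; exact h ⟨hs, r', hne⟩
  · right
    rcases Set.not_subset.mp hs with ⟨⟨x, y⟩, hp, hnp⟩
    simp only [Set.mem_insert_iff, Set.mem_singleton_iff, Prod.mk.injEq] at hnp
    have : x = false ∧ y = true := by
      cases x <;> cases y <;> simp_all
    rw [← this.1, ← this.2]; exact hp

/-- The core three-gamete contradiction: row `a` splits columns `k, l` and has
`1` at column `c`, while row `b` has `2` at `k`, `l` and `c`. -/
private lemma core (hexp : Explains B₁ B₂ A) (h3 : ThreeGamete B₁ B₂)
    (a b : Fin n) (k l c : Fin m)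
    (hak : A a k = 2) (hal : A a l = 2) (hsp : B₁ a k ≠ B₁ a l)
    (hbk : A b k = 2) (hbl : A b l = 2) (hac : A a c = 1) (hbc : A b c = 2) : False := by
  obtain ⟨u, u', mu, mu', huk, hneg, hone, hsplit, -⟩ := pick2 hexp a k hak
  have hul : u l = false := hsplit l hal hsp
  have hu'k : u' k = false := by rw [hneg k hak, huk]; rfl
  have hu'l : u' l = true := by rw [hneg l hal, hul]; rfl
  have huc : u c = true := (hone c hac).1
  have hu'c : u' c = true := (hone c hac).2
  obtain ⟨f, f', mf, mf', hfk, hfneg, -, -, -⟩ := pick2 hexp b k hbk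
  have hfl : f l = false := by
    cases h : f l
    · rfl
    · exfalso
      refine no3 h3 (c := k) (d := l) ?_ ?_ ?_
      · have := mu' k l; rwa [hu'k, hu'l] at this
      · have := mu k l; rwa [huk, hul] at this
      · have := mf k l; rwa [hfk, h] at this
  have hf'l : f' l = true := by rw [hfneg l hbl, hfl]; rfl
  have hfc : f c = true := by
    cases h : f c
    · exfalso
      refine no3 h3 (c := c) (d := k) ?_ ?_ ?_
      · have := mf c k; rwa [h, hfk] at this
      · have := mu' c k; rwa [hu'c, hu'k] at this
      · have := mu c k; rwa [huc, huk] at this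
    · rfl
  have hf'c : f' c = false := by rw [hfneg c hbc, hfc]; rfl
  refine no3 h3 (c := c) (d := l) ?_ ?_ ?_
  · have := mf' c l; rwa [hf'c, hf'l] at this
  · have := mf c l; rwa [hfc, hfl] at this
  · have := mu' c l; rwa [hu'c, hu'l] at this

/-- If row `a ∈ A_i` splits columns `k, l`, then any row `b` with `2` at both
`k` and `l` also has `2` at column `i`. -/
private lemma itwo (hexp : Explains B₁ B₂ A) (h3 : ThreeGamete B₁ B₂)
    (a b : Fin n) (i k l : Fin m)
    (ha : a ∈ rowSet A i) (hak : A a k = 2) (hal : A a l = 2)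
    (hsp : B₁ a k ≠ B₁ a l) (hbk : A b k = 2) (hbl : A b l = 2) : A b i = 2 := by
  by_cases hik : i = k
  · exact hik ▸ hbk
  by_cases hil : i = l
  · exact hil ▸ hbl
  have hnk : ¬ ColGreater A k i := ha.2.1 k (fun h => hik h.symm) hak
  have hnl : ¬ ColGreater A l i := ha.2.1 l (fun h => hil h.symm) hal
  rcases not_cg_cases hnk with hid | hxk
  · exact (hid b) ▸ hbk
  rcases not_cg_cases hnl with hid | hxl
  · exact (hid b) ▸ hbl
  have hxk' := indA_sub hexp k i hxk
  have hxl' := indA_sub hexp l i hxl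
  obtain ⟨u, u', mu, mu', huk, hneg, hone, hsplit, -⟩ := pick2 hexp a k hak
  have hul : u l = false := hsplit l hal hsp
  have hu'k : u' k = false := by rw [hneg k hak, huk]; rfl
  have hu'l : u' l = true := by rw [hneg l hal, hul]; rfl
  have hai : A a i = 2 := ha.1
  have hui' : u' i = !u i := hneg i hai
  obtain ⟨f, f', mf, mf', hfk, hfneg, -, -, hfid⟩ := pick2 hexp b k hbk
  have hfl : f l = false := by
    cases h : f l
    · rfl
    · exfalso
      refine no3 h3 (c := k) (d := l) ?_ ?_ ?_
      · have := mu' k l; rwa [hu'k, hu'l] at this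
      · have := mu k l; rwa [huk, hul] at this
      · have := mf k l; rwa [hfk, h] at this
  have hf'l : f' l = true := by rw [hfneg l hbl, hfl]; rfl
  have hf'k : f' k = false := by rw [hfneg k hbk, hfk]; rfl
  suffices hfi : f i ≠ f' i by
    apply eq2_of_ne hexp
    rcases hfid with ⟨h1, h2⟩ | ⟨h1, h2⟩
    · rw [← h1, ← h2]; exact hfi
    · rw [← h1, ← h2]; exact fun hh => hfi hh.symm
  cases hui : u i
  · -- case Y : `u i = false`
    have hu'i : u' i = true := by rw [hui', hui]; rfl
    have hf'i : f' i = true := by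
      cases h : f' i
      · exfalso
        refine no3 h3 (c := l) (d := i) hxl' ?_ ?_
        · have := mf' l i; rwa [hf'l, h] at this
        · have := mu' l i; rwa [hu'l, hu'i] at this
      · rfl
    have hfi2 : f i = false := by
      cases h : f i
      · rfl
      · exfalso
        refine no3 h3 (c := i) (d := k) ?_ ?_ ?_
        · have := mu i k; rwa [hui, huk] at this
        · have := mu' i k; rwa [hu'i, hu'k] at this
        · have := mf i k; rwa [h, hfk] at this
    rw [hfi2, hf'i]; simp
  · -- case X : `u i = true`
    have hu'i : u' i = false := by rw [hui', hui]; rfl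
    have hfi1 : f i = true := by
      cases h : f i
      · exfalso
        refine no3 h3 (c := k) (d := i) hxk' ?_ ?_
        · have := mf k i; rwa [hfk, h] at this
        · have := mu k i; rwa [huk, hui] at this
      · rfl
    have hf'i : f' i = false := by
      cases h : f' i
      · rfl
      · exfalso
        refine no3 h3 (c := i) (d := l) ?_ ?_ ?_
        · have := mu' i l; rwa [hu'i, hu'l] at this
        · have := mu i l; rwa [hui, hul] at this
        · have := mf' i l; rwa [h, hf'l] at this
    rw [hfi1, hf'i]; simp

end ResolutionHelpers

/-- Let `B` be a haplotype matrix explaining `A` that satisfies the three gamete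
property, let `g` (row `r` of `A`) lie in `A_i` with `g[k] = g[l] = 2`, and let
`h = B₁ r`, `h' = B₂ r` be the explaining haplotypes of `g`. If `G_i` contains an
edge `{k,l}` of weight `1`, then `h[k] ≠ h[l]`; if `G_i` contains an edge `{k,l}`
of weight `0`, then `h[k] = h[l]`. -/
theorem resolution_edge_forces_resolution {n m : ℕ} (A : Fin n → Fin m → Fin 3)
    (B₁ B₂ : Fin n → Fin m → Bool) (hexp : Explains B₁ B₂ A) (h3 : ThreeGamete B₁ B₂)
    (i k l : Fin m) (r : Fin n) (hr : r ∈ rowSet A i)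
    (hk : A r k = 2) (hl : A r l = 2) :
    (resEdge A i k l 1 → B₁ r k ≠ B₁ r l) ∧
    (resEdge A i k l 0 → B₁ r k = B₁ r l) := by
  constructor
  · rintro ⟨hkl, -, hc⟩ heq
    rcases hc with ⟨h0, -⟩ | ⟨-, hpats⟩
    · exact absurd h0 one_ne_zero
    · have h01 : ((false, true) : Bool × Bool) ∈ indB B₁ B₂ k l :=
        indA_sub hexp k l (hpats (by simp))
      have h10 : ((true, false) : Bool × Bool) ∈ indB B₁ B₂ k l :=
        indA_sub hexp k l (hpats (by simp))
      obtain ⟨u, u', mu, mu', huk, hneg, -, -, hid⟩ := pick2 hexp r k hk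
      have hul : u l = true := by
        rcases hid with ⟨h1, h2⟩ | ⟨h1, h2⟩
        · rw [h1] at huk ⊢; rw [← heq]; exact huk
        · rw [h1] at huk ⊢
          have hBk := (hexp r k).2.2 hk
          have hBl := (hexp r l).2.2 hl
          revert hBk hBl huk heq
          cases B₁ r k <;> cases B₂ r k <;> cases B₁ r l <;> cases B₂ r l <;> simp_all
      refine no3 h3 h01 h10 ?_
      have := mu k l; rwa [huk, hul] at this
  · rintro ⟨hkl, -, hc⟩
    by_contra hne
    rcases hc with ⟨-, hcase⟩ | ⟨h1, -⟩
    swap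
    · exact absurd h1 (by norm_num)
    obtain ⟨u, u', mu, mu', huk, hnegu, -, hsplitu, -⟩ := pick2 hexp r k hk
    have hul : u l = false := hsplitu l hl hne
    have hu'k : u' k = false := by rw [hnegu k hk, huk]; rfl
    have hu'l : u' l = true := by rw [hnegu l hl, hul]; rfl
    have h01 : ((false, true) : Bool × Bool) ∈ indB B₁ B₂ k l := by
      have := mu' k l; rwa [hu'k, hu'l] at this
    have h10 : ((true, false) : Bool × Bool) ∈ indB B₁ B₂ k l := by
      have := mu k l; rwa [huk, hul] at this
    rcases hcase with htt | ⟨j, hji, r₂, hr₂, hr₂k, hr₂l⟩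
    · exact no3 h3 h01 h10 (indA_sub hexp k l htt)
    · have hsp₂ : B₁ r₂ k ≠ B₁ r₂ l := by
        intro he
        obtain ⟨v, v', mv, -, hvk, hnegv, -, -, hvid⟩ := pick2 hexp r₂ k hr₂k
        have hvl : v l = true := by
          rcases hvid with ⟨h1, h2⟩ | ⟨h1, h2⟩
          · rw [h1] at hvk ⊢; rw [← he]; exact hvk
          · rw [h1] at hvk ⊢
            have hBk := (hexp r₂ k).2.2 hr₂k
            have hBl := (hexp r₂ l).2.2 hr₂l
            revert hBk hBl hvk he
            cases B₁ r₂ k <;> cases B₂ r₂ k <;> cases B₁ r₂ l <;> cases B₂ r₂ l <;> simp_all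
        refine no3 h3 h01 h10 ?_
        have := mv k l; rwa [hvk, hvl] at this
      have hA2i : A r₂ i = 2 := itwo hexp h3 r r₂ i k l hr hk hl hne hr₂k hr₂l
      have hA2j : A r j = 2 := itwo hexp h3 r₂ r j k l hr₂ hr₂k hr₂l hsp₂ hk hl
      rcases lt_trichotomy i j with hij | hij | hij
      · -- `i < j` : column `i` is not maximal in row `r₂`
        have hnotmax : ¬ (A r₂ i = 2 ∧
            ∀ c : Fin m, c ≠ i → A r₂ c = 2 → ¬ ColGreater A c i) := by
          intro hh
          exact absurd (hr₂.2.2 i (Ne.symm hji) hh) (lt_asymm hij)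
        push_neg at hnotmax
        obtain ⟨c, hci, hc2, hcg⟩ := hnotmax hA2i
        have hrc : A r c = 1 := by
          rcases fin3_cases (A r c) with h0 | h1 | h2
          · exfalso
            have hmem : ((false, true) : Bool × Bool) ∈ indA A c i :=
              ⟨r, Or.inr (Or.inl ⟨h0, hr.1⟩)⟩
            have := hcg.1 hmem
            simp at this
          · exact h1
          · exact absurd hcg (hr.2.1 c hci h2)
        exact core hexp h3 r r₂ k l c hk hl hne hr₂k hr₂l hrc hc2
      · exact hji hij.symm
      · -- `j < i` : column `j` is not maximal in row `r`
        have hnotmax : ¬ (A r j = 2 ∧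
            ∀ c : Fin m, c ≠ j → A r c = 2 → ¬ ColGreater A c j) := by
          intro hh
          exact absurd (hr.2.2 j hji hh) (lt_asymm hij)
        push_neg at hnotmax
        obtain ⟨c, hcj, hc2, hcg⟩ := hnotmax hA2j
        have hrc : A r₂ c = 1 := by
          rcases fin3_cases (A r₂ c) with h0 | h1 | h2
          · exfalso
            have hmem : ((false, true) : Bool × Bool) ∈ indA A c j :=
              ⟨r₂, Or.inr (Or.inl ⟨h0, hr₂.1⟩)⟩
            have := hcg.1 hmem
            simp at this
          · exact h1
          · exact absurd hcg (hr₂.2.1 c hcj h2)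
        exact core hexp h3 r₂ r k l c hr₂k hr₂l hsp₂ hk hl hrc hc2
end

section
/- Let A be a genotype matrix and B a haplotype matrix explaining A that satisfies the three gamete property. If i, j are columns with {01,10} ⊆ ind^A(i,j), then for every row g of A with g[i] = g[j] = 2 the two rows h, h' of B explaining g satisfy h[i] ≠ h[j] (g is resolved unequally in i and j). -/

lemma col_eq_of_explains {n m : ℕ} {A : Fin n → Fin m → Fin 3}
    {B₁ B₂ : Fin n → Fin m → Bool} (hexp : Explains B₁ B₂ A)
    (r : Fin n) (i : Fin m) (x : Bool) (h : A r i = boolToFin3 x) :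
    B₁ r i = x ∧ B₂ r i = x := by
  cases x with
  | false => exact ((hexp r i).1 h)
  | true => exact ((hexp r i).2.1 h)

lemma mem_indB_of_mem_indA {n m : ℕ} {A : Fin n → Fin m → Fin 3}
    {B₁ B₂ : Fin n → Fin m → Bool} (hexp : Explains B₁ B₂ A)
    (i j : Fin m) (x y : Bool) (h : (x, y) ∈ indA A i j) :
    (x, y) ∈ indB B₁ B₂ i j := by
  obtain ⟨r, hc⟩ := h
  rcases hc with ⟨h1, h2⟩ | ⟨h1, h2⟩ | ⟨h1, h2⟩
  · exact ⟨r, Or.inl ⟨(col_eq_of_explains hexp r i x h1).1,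
      (col_eq_of_explains hexp r j y h2).1⟩⟩
  · have hi := col_eq_of_explains hexp r i x h1
    have hne := (hexp r j).2.2 h2
    by_cases hb : B₁ r j = y
    · exact ⟨r, Or.inl ⟨hi.1, hb⟩⟩
    · refine ⟨r, Or.inr ⟨hi.2, ?_⟩⟩
      cases y <;> cases hB1 : B₁ r j <;> cases hB2 : B₂ r j <;>
        simp_all
  · have hj := col_eq_of_explains hexp r j y h2
    have hne := (hexp r i).2.2 h1
    by_cases hb : B₁ r i = x
    · exact ⟨r, Or.inl ⟨hb, hj.1⟩⟩
    · refine ⟨r, Or.inr ⟨?_, hj.2⟩⟩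
      cases x <;> cases hB1 : B₁ r i <;> cases hB2 : B₂ r i <;>
        simp_all

/-- Let `B` be a haplotype matrix explaining `A` that satisfies the three gamete
property. If `i, j` are columns with `{01,10} ⊆ ind^A(i,j)`, then every row `g` of
`A` with `g[i] = g[j] = 2` is resolved unequally in `i` and `j` by its explaining
haplotypes. -/
theorem unequal_resolution_of_01_10 {n m : ℕ} (A : Fin n → Fin m → Fin 3)
    (B₁ B₂ : Fin n → Fin m → Bool) (hexp : Explains B₁ B₂ A) (h3 : ThreeGamete B₁ B₂)
    (i j : Fin m)
    (hind : ({(false, true), (true, false)} : Set (Bool × Bool)) ⊆ indA A i j)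
    (r : Fin n) (hi : A r i = 2) (hj : A r j = 2) :
    B₁ r i ≠ B₁ r j := by
  
  intro heq
  have h01 : (false, true) ∈ indB B₁ B₂ i j :=
    mem_indB_of_mem_indA hexp i j false true (hind (by simp))
  have h10 : (true, false) ∈ indB B₁ B₂ i j :=
    mem_indB_of_mem_indA hexp i j true false (hind (by simp))
  have hni := (hexp r i).2.2 hi
  have hnj := (hexp r j).2.2 hj
  have h11 : (true, true) ∈ indB B₁ B₂ i j := by
    cases hB1 : B₁ r i <;> cases hB2 : B₂ r i
    · simp_all
    · exact ⟨r, Or.inr ⟨hB2, by cases hB2' : B₂ r j <;> simp_all⟩⟩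
    · exact ⟨r, Or.inl ⟨hB1, by simp_all⟩⟩
    · simp_all
  exact h3 i j (by
    intro p hp
    simp only [Set.mem_insert_iff, Set.mem_singleton_iff] at hp
    rcases hp with rfl | rfl | rfl
    · exact h01
    · exact h10
    · exact h11)
end

section
/- Let A be a genotype matrix and B a haplotype matrix explaining A that satisfies the three gamete property. Let g be a row of A and i, j, k columns with g[i] = g[j] = g[k] = 2, 11 ∈ ind^A(i,j) and {01,10} ⊆ ind^A(j,k). Then the two rows h, h' of B explaining g satisfy h[i] = h'[k] ≠ h'[i] = h[k]; in particular h[i] ≠ h[k]. -/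

lemma copy_entry {m : ℕ} {h h' : Fin m → Bool} {g : Fin m → Fin 3}
    (he : ExplainsRow h h' g) {i : Fin m} {b : Bool} (hb : g i = boolToFin3 b) :
    h i = b ∧ h' i = b := by
  cases b with
  | false => exact (he i).1 hb
  | true => exact (he i).2.1 hb

lemma indA_sub_indB {n m : ℕ} {A : Fin n → Fin m → Fin 3} {B₁ B₂ : Fin n → Fin m → Bool}
    (hexp : Explains B₁ B₂ A) (i j : Fin m) : indA A i j ⊆ indB B₁ B₂ i j := by
  rintro ⟨b, c⟩ ⟨s, hs | hs | hs⟩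
  · exact ⟨s, Or.inl ⟨(copy_entry (hexp s) hs.1).1, (copy_entry (hexp s) hs.2).1⟩⟩
  · have hne := (hexp s j).2.2 hs.2
    have hb := copy_entry (hexp s) hs.1
    refine ⟨s, ?_⟩
    by_cases hc : B₁ s j = c
    · exact Or.inl ⟨hb.1, hc⟩
    · have : B₂ s j = c := by
        revert hne hc; cases B₁ s j <;> cases B₂ s j <;> cases c <;> simp
      exact Or.inr ⟨hb.2, this⟩
  · have hne := (hexp s i).2.2 hs.1
    have hc := copy_entry (hexp s) hs.2
    refine ⟨s, ?_⟩
    by_cases hb : B₁ s i = b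
    · exact Or.inl ⟨hb, hc.1⟩
    · have : B₂ s i = b := by
        revert hne hb; cases B₁ s i <;> cases B₂ s i <;> cases b <;> simp
      exact Or.inr ⟨this, hc.2⟩

/-- Let `B` be a haplotype matrix explaining `A` that satisfies the three gamete
property, and let `g` (row `r` of `A`) and columns `i, j, k` satisfy
`g[i] = g[j] = g[k] = 2`, `11 ∈ ind^A(i,j)` and `{01,10} ⊆ ind^A(j,k)`. Then the
explaining haplotypes `h = B₁ r`, `h' = B₂ r` of `g` satisfy
`h[i] = h'[k] ≠ h'[i] = h[k]`; in particular `h[i] ≠ h[k]`. -/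
theorem resolution_propagation {n m : ℕ} (A : Fin n → Fin m → Fin 3)
    (B₁ B₂ : Fin n → Fin m → Bool) (hexp : Explains B₁ B₂ A) (h3 : ThreeGamete B₁ B₂)
    (r : Fin n) (i j k : Fin m)
    (hi : A r i = 2) (hj : A r j = 2) (hk : A r k = 2)
    (h11 : ((true, true) : Bool × Bool) ∈ indA A i j)
    (h0110 : ({(false, true), (true, false)} : Set (Bool × Bool)) ⊆ indA A j k) :
    B₁ r i = B₂ r k ∧ B₂ r k ≠ B₂ r i ∧ B₂ r i = B₁ r k ∧ B₁ r i ≠ B₁ r k := by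
  have hij : ((true,true) : Bool×Bool) ∈ indB B₁ B₂ i j := indA_sub_indB hexp i j h11
  have hjk01 : ((false,true) : Bool×Bool) ∈ indB B₁ B₂ j k :=
    indA_sub_indB hexp j k (h0110 (by simp))
  have hjk10 : ((true,false) : Bool×Bool) ∈ indB B₁ B₂ j k :=
    indA_sub_indB hexp j k (h0110 (by simp))
  have hni : B₁ r i ≠ B₂ r i := (hexp r i).2.2 hi
  have hnj : B₁ r j ≠ B₂ r j := (hexp r j).2.2 hj
  have hnk : B₁ r k ≠ B₂ r k := (hexp r k).2.2 hk
  have m1 : ((B₁ r i, B₁ r j) : Bool×Bool) ∈ indB B₁ B₂ i j := ⟨r, Or.inl ⟨rfl, rfl⟩⟩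
  have m2 : ((B₂ r i, B₂ r j) : Bool×Bool) ∈ indB B₁ B₂ i j := ⟨r, Or.inr ⟨rfl, rfl⟩⟩
  have m3 : ((B₁ r j, B₁ r k) : Bool×Bool) ∈ indB B₁ B₂ j k := ⟨r, Or.inl ⟨rfl, rfl⟩⟩
  have m4 : ((B₂ r j, B₂ r k) : Bool×Bool) ∈ indB B₁ B₂ j k := ⟨r, Or.inr ⟨rfl, rfl⟩⟩
  have stepA : B₁ r i = B₁ r j := by
    by_contra hne
    apply h3 i j
    intro p hp
    simp only [Set.mem_insert_iff, Set.mem_singleton_iff] at hp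
    rcases hp with rfl | rfl | rfl
    · revert m1 m2; cases hbi : B₁ r i <;> cases hbj : B₁ r j <;>
        cases hci : B₂ r i <;> cases hcj : B₂ r j <;> simp_all
    · revert m1 m2; cases hbi : B₁ r i <;> cases hbj : B₁ r j <;>
        cases hci : B₂ r i <;> cases hcj : B₂ r j <;> simp_all
    · exact hij
  have stepB : B₁ r j ≠ B₁ r k := by
    intro heq
    apply h3 j k
    intro p hp
    simp only [Set.mem_insert_iff, Set.mem_singleton_iff] at hp
    rcases hp with rfl | rfl | rfl
    · exact hjk01
    · exact hjk10
    · revert m3 m4; cases hbj : B₁ r j <;> cases hbk : B₁ r k <;>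
        cases hcj : B₂ r j <;> cases hck : B₂ r k <;> simp_all
  revert hni hnk stepA stepB hnj
  cases B₁ r i <;> cases B₁ r j <;> cases B₁ r k <;> cases B₂ r i <;>
    cases B₂ r j <;> cases B₂ r k <;> simp
end
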